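/- Let G be a set of maps ℝᵈ → ℝᵈ closed under composition, and let f₁, f₂ : ℝᵈ → ℝᵈ be C^1 maps with bounded first derivatives. Suppose that for every compact K ⊆ ℝᵈ and every ε > 0, there exist g₁, g₂ ∈ G with ‖f₁ − g₁‖_{C^1(K)} < ε and ‖f₂ − g₂‖_{C^1(K)} < ε. Then for every compact K ⊆ ℝᵈ and every ε > 0, there exists h ∈ G with ‖f₂ ∘ f₁ − h‖_{C^0(K)} < ε. -/

import Mathlib

/-- If a composition-closed family `G` approximates `C^1` maps `f₁, f₂` (with bounded
first derivatives) in `C^1` norm on every compact set, then it approximates the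
composition `f₂ ∘ f₁` in `C^0` norm on every compact set. -/
theorem approx_composition (d : ℕ)
    (G : Set ((Fin d → ℝ) → (Fin d → ℝ)))
    (hGcomp : ∀ g₁ ∈ G, ∀ g₂ ∈ G, g₂ ∘ g₁ ∈ G)
    (f₁ f₂ : (Fin d → ℝ) → (Fin d → ℝ))
    (hf₁ : ContDiff ℝ 1 f₁) (hf₂ : ContDiff ℝ 1 f₂)
    (hbdd₁ : ∃ C : ℝ, ∀ x, ‖fderiv ℝ f₁ x‖ ≤ C)
    (hbdd₂ : ∃ C : ℝ, ∀ x, ‖fderiv ℝ f₂ x‖ ≤ C)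
    (happrox : ∀ K : Set (Fin d → ℝ), IsCompact K → ∀ ε > (0 : ℝ),
      ∃ g₁ ∈ G, ∃ g₂ ∈ G,
        (∀ x ∈ K, ‖f₁ x - g₁ x‖ < ε ∧ ‖fderiv ℝ f₁ x - fderiv ℝ g₁ x‖ < ε) ∧
        (∀ x ∈ K, ‖f₂ x - g₂ x‖ < ε ∧ ‖fderiv ℝ f₂ x - fderiv ℝ g₂ x‖ < ε)) :
    ∀ K : Set (Fin d → ℝ), IsCompact K → ∀ ε > (0 : ℝ),
      ∃ h ∈ G, ∀ x ∈ K, ‖f₂ (f₁ x) - h x‖ < ε := by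
  intro K hK ε hε
  obtain ⟨C₂, hC₂⟩ := hbdd₂
  set C : ℝ := max C₂ 0 with hCdef
  have hC0 : 0 ≤ C := le_max_right _ _
  -- f₂ is Lipschitz with constant C
  have hlip : ∀ x y : Fin d → ℝ, ‖f₂ x - f₂ y‖ ≤ C * ‖x - y‖ := by
    intro x y
    have := Convex.norm_image_sub_le_of_norm_fderiv_le
      (f := f₂) (C := C)
      (fun z _ => (hf₂.differentiable one_ne_zero).differentiableAt)
      (fun z _ => le_trans (hC₂ z) (le_max_left _ _))
      convex_univ (Set.mem_univ y) (Set.mem_univ x)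
    simpa using this
  -- thickened image
  set K' : Set (Fin d → ℝ) := Metric.cthickening 1 (f₁ '' K) with hK'def
  have hK'cpt : IsCompact K' := (hK.image (hf₁.continuous)).cthickening
  have hKK' : IsCompact (K ∪ K') := hK.union hK'cpt
  set δ : ℝ := min 1 (ε / (2 * (C + 1))) with hδdef
  have hδpos : 0 < δ := lt_min one_pos (by positivity)
  obtain ⟨g₁, hg₁G, g₂, hg₂G, h₁, h₂⟩ := happrox (K ∪ K') hKK' δ hδpos
  refine ⟨g₂ ∘ g₁, hGcomp g₁ hg₁G g₂ hg₂G, fun x hx => ?_⟩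
  have hxU : x ∈ K ∪ K' := Or.inl hx
  have hf₁g₁ : ‖f₁ x - g₁ x‖ < δ := (h₁ x hxU).1
  have hg₁mem : g₁ x ∈ K' := by
    apply Metric.mem_cthickening_of_dist_le (g₁ x) (f₁ x) 1 (f₁ '' K) ⟨x, hx, rfl⟩
    rw [dist_eq_norm, ← norm_neg]
    simpa using le_trans hf₁g₁.le (min_le_left _ _)
  have hf₂g₂ : ‖f₂ (g₁ x) - g₂ (g₁ x)‖ < δ := (h₂ (g₁ x) (Or.inr hg₁mem)).1
  have key : ‖f₂ (f₁ x) - g₂ (g₁ x)‖ ≤ ‖f₂ (f₁ x) - f₂ (g₁ x)‖ + ‖f₂ (g₁ x) - g₂ (g₁ x)‖ :=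
    norm_sub_le_norm_sub_add_norm_sub _ _ _
  have h1 : ‖f₂ (f₁ x) - f₂ (g₁ x)‖ ≤ C * δ :=
    le_trans (hlip _ _) (mul_le_mul_of_nonneg_left hf₁g₁.le hC0)
  have : ‖f₂ (f₁ x) - g₂ (g₁ x)‖ < C * δ + δ := by
    calc ‖f₂ (f₁ x) - g₂ (g₁ x)‖ ≤ _ + _ := key
    _ < C * δ + δ := by nlinarith
  have hδle : δ ≤ ε / (2 * (C + 1)) := min_le_right _ _
  have : C * δ + δ ≤ ε / 2 := by
    have : (C + 1) * δ ≤ (C + 1) * (ε / (2 * (C + 1))) :=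
      mul_le_mul_of_nonneg_left hδle (by linarith)
    have heq : (C + 1) * (ε / (2 * (C + 1))) = ε / 2 := by
      field_simp
    nlinarith
  simp only [Function.comp_apply]
  linarith
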